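/- Let A be a random adjacency tensor: on a probability space, the entries {A(i₁,i₂,i₃) : 1 ≤ i₁ ≤ i₂ ≤ n, 1 ≤ i₃ ≤ L} are independent Bernoulli random variables, A(i₂,i₁,i₃) = A(i₁,i₂,i₃) for all indices, and p_max = max_{i₁,i₂,i₃} E A(i₁,i₂,i₃) > 0. Let δ ∈ (0,1] and let u₁ ∈ ℝⁿ, u₂ ∈ ℝⁿ, u₃ ∈ ℝ^L be deterministic vectors with ‖u₁‖_{ℓ₂} ≤ 1, ‖u₂‖_{ℓ₂} ≤ 1, ‖u₃‖_{ℓ₂} ≤ 1 and ‖u₁‖_{ℓ∞} ≤ δ. Then for every t > 0, P( Σ_{i₁,i₂,i₃} (A(i₁,i₂,i₃) − E A(i₁,i₂,i₃)) u₁(i₁) u₂(i₂) u₃(i₃) ≥ t ) ≤ exp(−t²/(8 p_max)) + exp(−3t/(8δ)). -/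

import Mathlib

open MeasureTheory ProbabilityTheory

section Aux
open Real Nat Finset

lemma aux_exp_tsum (a : ℝ) : Real.exp a = ∑' n : ℕ, a ^ n / n ! := by
  rw [Real.exp_eq_exp_ℝ, NormedSpace.exp_eq_tsum_div]

lemma aux_fact_ge (n : ℕ) : 2 * 3 ^ n ≤ (n + 2)! := by
  induction n with
  | zero => simp [Nat.factorial]
  | succ k ih =>
    calc 2 * 3 ^ (k + 1) = 3 * (2 * 3 ^ k) := by ring
    _ ≤ 3 * (k + 2)! := by omega
    _ ≤ (k + 3) * (k + 2)! := by
        have := (k+2).factorial_pos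
        nlinarith
    _ = (k + 3)! := rfl

lemma aux_phi_pos_bound {a : ℝ} (h0 : 0 ≤ a) (h3 : a < 3) :
    Real.exp a - 1 - a ≤ a ^ 2 / (2 * (1 - a / 3)) := by
  have hs : Summable (fun n : ℕ => a ^ n / n !) := Real.summable_pow_div_factorial a
  have hshift := Summable.sum_add_tsum_nat_add (f := fun n : ℕ => a ^ n / n !) 2 hs
  have hexp : Real.exp a - 1 - a = ∑' n : ℕ, a ^ (n + 2) / (n + 2)! := by
    rw [aux_exp_tsum, ← hshift]
    simp [Finset.sum_range_succ, Nat.factorial]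
    ring
  have hr : a / 3 < 1 := by linarith
  have hr0 : 0 ≤ a / 3 := by linarith
  have hgeo : Summable (fun n : ℕ => (a ^ 2 / 2) * (a / 3) ^ n) :=
    (summable_geometric_of_lt_one hr0 hr).mul_left _
  have hle : ∀ n : ℕ, a ^ (n + 2) / (n + 2)! ≤ (a ^ 2 / 2) * (a / 3) ^ n := by
    intro n
    have h1 : (0:ℝ) < (n + 2)! := by positivity
    have h2 : (2:ℝ) * 3 ^ n ≤ (n + 2)! := by exact_mod_cast aux_fact_ge n
    have h3' : (0:ℝ) ≤ a ^ (n + 2) := by positivity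
    rw [div_le_iff₀ h1]
    have heq : (a ^ 2 / 2) * (a / 3) ^ n = a ^ (n + 2) / (2 * 3 ^ n) := by
      rw [div_pow]
      field_simp
      ring
    rw [heq, div_mul_eq_mul_div, le_div_iff₀ (by positivity)]
    nlinarith [pow_pos (show (0:ℝ) < 3 by norm_num) n]
  calc Real.exp a - 1 - a = ∑' n : ℕ, a ^ (n + 2) / (n + 2)! := hexp
    _ ≤ ∑' n : ℕ, (a ^ 2 / 2) * (a / 3) ^ n := by
        refine Summable.tsum_le_tsum hle ?_ hgeo
        exact (summable_nat_add_iff 2).2 hs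
    _ = (a ^ 2 / 2) * (1 - a / 3)⁻¹ := by
        rw [tsum_mul_left, tsum_geometric_of_lt_one hr0 hr]
    _ = a ^ 2 / (2 * (1 - a / 3)) := by field_simp

lemma aux_phi_neg_bound {a : ℝ} (h0 : a ≤ 0) : Real.exp a - 1 - a ≤ a ^ 2 / 2 := by
  have key : AntitoneOn (fun x : ℝ => x ^ 2 / 2 + 1 + x - Real.exp x) (Set.Iic 0) := by
    apply antitoneOn_of_deriv_nonpos (convex_Iic 0)
    · fun_prop
    · fun_prop
    · intro x hx
      simp only [interior_Iic, Set.mem_Iio] at hx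
      have hd : deriv (fun x : ℝ => x ^ 2 / 2 + 1 + x - Real.exp x) x = x + 1 - Real.exp x := by
        have h1 : DifferentiableAt ℝ (fun x : ℝ => x ^ 2 / 2 + 1 + x) x := by fun_prop
        rw [deriv_fun_sub h1 (Real.differentiable_exp x), Real.deriv_exp]
        have h2 : deriv (fun x : ℝ => x ^ 2 / 2 + 1 + x) x = x + 1 := by
          rw [deriv_fun_add (by fun_prop) (by fun_prop), deriv_fun_add (by fun_prop) (by fun_prop)]
          simp [deriv_div_const]
        rw [h2]
      rw [hd]
      have := Real.add_one_le_exp x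
      linarith
  have := key h0 (Set.mem_Iic.2 le_rfl) h0
  simp only [ne_eq, OfNat.ofNat_ne_zero, not_false_eq_true, zero_pow, zero_div, zero_add,
    Real.exp_zero] at this
  linarith

lemma aux_phi_le {a r : ℝ} (hr1 : r < 1) (hr0 : 0 ≤ r) (ha : a ≤ 3 * r) :
    Real.exp a - 1 - a ≤ a ^ 2 / (2 * (1 - r)) := by
  rcases le_or_gt a 0 with h | h
  · calc Real.exp a - 1 - a ≤ a ^ 2 / 2 := aux_phi_neg_bound h
      _ ≤ a ^ 2 / (2 * (1 - r)) := by
        apply div_le_div_of_nonneg_left (by positivity) (by linarith) (by linarith)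
  · have h3 : a < 3 := by linarith
    calc Real.exp a - 1 - a ≤ a ^ 2 / (2 * (1 - a / 3)) := aux_phi_pos_bound h.le h3
      _ ≤ a ^ 2 / (2 * (1 - r)) := by
        apply div_le_div_of_nonneg_left (by positivity) (by linarith) (by linarith)

variable {Ω : Type*} [MeasureSpace Ω] [IsProbabilityMeasure (ℙ : Measure Ω)]

lemma aux_bern_integrable (B : Ω → ℝ) (hB : Measurable B) (hval : ∀ ω, B ω = 0 ∨ B ω = 1) :
    Integrable B ℙ := by
  refine (integrable_const (1:ℝ)).mono' hB.aestronglyMeasurable (ae_of_all _ fun ω => ?_)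
  rcases hval ω with h | h <;> simp [h]

lemma aux_bern_mean_mem (B : Ω → ℝ) (hB : Measurable B) (hval : ∀ ω, B ω = 0 ∨ B ω = 1) :
    0 ≤ ∫ ω, B ω ∧ ∫ ω, B ω ≤ 1 := by
  constructor
  · exact integral_nonneg fun ω => by rcases hval ω with h | h <;> simp [h]
  · have h : ∫ ω, B ω ≤ ∫ _ω : Ω, (1:ℝ) := by
      refine integral_mono (aux_bern_integrable B hB hval) (integrable_const 1) fun ω => ?_
      rcases hval ω with h | h <;> simp [h]
    simpa using h

lemma aux_bern_mgf_eq (B : Ω → ℝ) (hB : Measurable B) (hval : ∀ ω, B ω = 0 ∨ B ω = 1) (a : ℝ) :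
    ∫ ω, Real.exp (a * (B ω - ∫ ω', B ω')) =
      Real.exp (-(a * ∫ ω', B ω')) * (1 + (Real.exp a - 1) * ∫ ω', B ω') := by
  set p := ∫ ω', B ω' with hp
  have hpt : ∀ ω, Real.exp (a * (B ω - p)) = Real.exp (-(a * p)) * (1 + (Real.exp a - 1) * B ω) := by
    intro ω
    rcases hval ω with h | h <;> rw [h]
    · rw [show a * (0 - p) = -(a * p) by ring]
      ring_nf
    · rw [show a * (1 - p) = a + -(a * p) by ring, Real.exp_add,
        show 1 + (Real.exp a - 1) * 1 = Real.exp a by ring, mul_comm]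
  calc ∫ ω, Real.exp (a * (B ω - p)) = ∫ ω, Real.exp (-(a * p)) * (1 + (Real.exp a - 1) * B ω) :=
        integral_congr_ae (ae_of_all _ hpt)
    _ = Real.exp (-(a * p)) * ∫ ω, (1 + (Real.exp a - 1) * B ω) := integral_const_mul _ _
    _ = Real.exp (-(a * p)) * (1 + (Real.exp a - 1) * p) := by
        rw [integral_add (integrable_const 1) ((aux_bern_integrable B hB hval).const_mul _),
          integral_const_mul]
        simp [hp]

lemma aux_bern_mgf_le (B : Ω → ℝ) (hB : Measurable B) (hval : ∀ ω, B ω = 0 ∨ B ω = 1)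
    (a r : ℝ) (hr1 : r < 1) (hr0 : 0 ≤ r) (ha : a ≤ 3 * r) :
    ∫ ω, Real.exp (a * (B ω - ∫ ω', B ω')) ≤
      Real.exp ((∫ ω', B ω') * (a ^ 2 / (2 * (1 - r)))) := by
  set p := ∫ ω', B ω' with hp
  obtain ⟨hp0, hp1⟩ := aux_bern_mean_mem B hB hval
  rw [aux_bern_mgf_eq B hB hval a]
  have h1 : 1 + (Real.exp a - 1) * p ≤ Real.exp ((Real.exp a - 1) * p) := by
    have := Real.add_one_le_exp ((Real.exp a - 1) * p)
    linarith
  have h2 : Real.exp (-(a * p)) * (1 + (Real.exp a - 1) * p) ≤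
      Real.exp (-(a * p)) * Real.exp ((Real.exp a - 1) * p) :=
    mul_le_mul_of_nonneg_left h1 (Real.exp_nonneg _)
  calc Real.exp (-(a * p)) * (1 + (Real.exp a - 1) * p)
      ≤ Real.exp (-(a * p) + (Real.exp a - 1) * p) := by rw [Real.exp_add]; exact h2
    _ = Real.exp (p * (Real.exp a - 1 - a)) := by ring_nf
    _ ≤ Real.exp (p * (a ^ 2 / (2 * (1 - r)))) := by
        exact Real.exp_le_exp.2 (mul_le_mul_of_nonneg_left (aux_phi_le hr1 hr0 ha) hp0)

lemma aux_sum_split {n L : ℕ} (F G : Fin n × Fin n × Fin L → ℝ)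
    (hG : ∀ q : Fin n × Fin n × Fin L, q.1 ≤ q.2.1 →
      G q = if q.1 = q.2.1 then F q else F q + F (q.2.1, q.1, q.2.2)) :
    ∑ q : Fin n × Fin n × Fin L, F q =
      ∑ q ∈ Finset.univ.filter (fun q : Fin n × Fin n × Fin L => q.1 ≤ q.2.1), G q := by
  classical
  have hfilter : (univ.filter (fun q : Fin n × Fin n × Fin L => q.1 ≤ q.2.1)) =
      (univ.filter (fun q : Fin n × Fin n × Fin L => q.1 < q.2.1)) ∪
        (univ.filter (fun q : Fin n × Fin n × Fin L => q.1 = q.2.1)) := by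
    rw [← filter_or]
    apply filter_congr
    intro q _
    simp [le_iff_lt_or_eq]
  have hdisj : Disjoint (univ.filter (fun q : Fin n × Fin n × Fin L => q.1 < q.2.1))
      (univ.filter (fun q : Fin n × Fin n × Fin L => q.1 = q.2.1)) :=
    disjoint_filter.2 (fun q _ hlt heq => absurd heq (ne_of_lt hlt))
  have hswap : ∑ q ∈ univ.filter (fun q : Fin n × Fin n × Fin L => ¬ q.1 ≤ q.2.1), F q
      = ∑ q ∈ univ.filter (fun q : Fin n × Fin n × Fin L => q.1 < q.2.1), F (q.2.1, q.1, q.2.2) := by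
    apply Finset.sum_nbij' (i := fun q => (q.2.1, q.1, q.2.2))
      (j := fun q => (q.2.1, q.1, q.2.2))
    · intro q hq
      simp only [mem_filter, mem_univ, true_and, not_le] at hq ⊢
      exact hq
    · intro q hq
      simp only [mem_filter, mem_univ, true_and, not_le] at hq ⊢
      exact hq
    · intro q _; rfl
    · intro q _; rfl
    · intro q _; rfl
  have hsplitG : ∑ q ∈ univ.filter (fun q : Fin n × Fin n × Fin L => q.1 ≤ q.2.1), G q
      = (∑ q ∈ univ.filter (fun q : Fin n × Fin n × Fin L => q.1 < q.2.1),
          (F q + F (q.2.1, q.1, q.2.2)))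
        + ∑ q ∈ univ.filter (fun q : Fin n × Fin n × Fin L => q.1 = q.2.1), F q := by
    rw [hfilter, sum_union hdisj]
    congr 1
    · apply Finset.sum_congr rfl
      intro q hq
      simp only [mem_filter, mem_univ, true_and] at hq
      rw [hG q hq.le, if_neg (_root_.ne_of_lt hq)]
    · apply Finset.sum_congr rfl
      intro q hq
      simp only [mem_filter, mem_univ, true_and] at hq
      rw [hG q hq.le, if_pos hq]
  have hsplitF : ∑ q ∈ univ.filter (fun q : Fin n × Fin n × Fin L => q.1 ≤ q.2.1), F q
      = (∑ q ∈ univ.filter (fun q : Fin n × Fin n × Fin L => q.1 < q.2.1), F q)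
        + ∑ q ∈ univ.filter (fun q : Fin n × Fin n × Fin L => q.1 = q.2.1), F q := by
    rw [hfilter, sum_union hdisj]
  rw [← Finset.sum_filter_add_sum_filter_not univ
      (fun q : Fin n × Fin n × Fin L => q.1 ≤ q.2.1) F,
    hsplitG, hsplitF, hswap, Finset.sum_add_distrib]
  ring

lemma aux_entry_le {ι : Type*} [Fintype ι] (u : ι → ℝ) (h : ∑ i, u i ^ 2 ≤ 1) (i : ι) :
    |u i| ≤ 1 := by
  have h1 : u i ^ 2 ≤ 1 := le_trans (Finset.single_le_sum (f := fun j => u j ^ 2)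
    (fun j _ => sq_nonneg _) (Finset.mem_univ i)) h
  nlinarith [sq_abs (u i), abs_nonneg (u i)]

end Aux

/-- **Bernstein bound for a rank-one projection of the centered adjacency tensor**
(from the proof of Theorem 1/Theorem 5 of the paper): for deterministic unit vectors
`u₁, u₂, u₃` with `‖u₁‖_∞ ≤ δ`,
`P(⟨A − EA, u₁⊗u₂⊗u₃⟩ ≥ t) ≤ exp(−t²/(8 p_max)) + exp(−3t/(8δ))`. -/
theorem bernstein_rank_one_projection
    {Ω : Type*} [MeasureSpace Ω] [IsProbabilityMeasure (ℙ : Measure Ω)]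
    (n L : ℕ)
    (A : Fin n → Fin n → Fin L → Ω → ℝ)
    (hmeas : ∀ i₁ i₂ i₃, Measurable (A i₁ i₂ i₃))
    (hval : ∀ i₁ i₂ i₃ ω, A i₁ i₂ i₃ ω = 0 ∨ A i₁ i₂ i₃ ω = 1)
    (hsym : ∀ i₁ i₂ i₃, A i₂ i₁ i₃ = A i₁ i₂ i₃)
    (hindep : iIndepFun
      (fun q : {q : Fin n × Fin n × Fin L // q.1 ≤ q.2.1} =>
        A q.1.1 q.1.2.1 q.1.2.2) ℙ)
    (pmax : ℝ) (hpmax_pos : 0 < pmax)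
    (hpmax : IsGreatest {x | ∃ i₁ i₂ i₃, x = ∫ ω, A i₁ i₂ i₃ ω} pmax)
    (δ : ℝ) (hδ : δ ∈ Set.Ioc (0 : ℝ) 1)
    (u₁ u₂ : Fin n → ℝ) (u₃ : Fin L → ℝ)
    (hu₁ : ∑ i, (u₁ i) ^ 2 ≤ 1) (hu₂ : ∑ i, (u₂ i) ^ 2 ≤ 1)
    (hu₃ : ∑ i, (u₃ i) ^ 2 ≤ 1)
    (hinf : ∀ i, |u₁ i| ≤ δ) :
    ∀ t : ℝ, 0 < t →
      ℙ {ω | t ≤ ∑ i₁, ∑ i₂, ∑ i₃,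
            (A i₁ i₂ i₃ ω - ∫ ω', A i₁ i₂ i₃ ω') * u₁ i₁ * u₂ i₂ * u₃ i₃}
        ≤ ENNReal.ofReal
            (Real.exp (-t ^ 2 / (8 * pmax)) + Real.exp (-(3 * t) / (8 * δ))) := by
  intro t ht
  classical
  obtain ⟨hδ0, hδ1⟩ := hδ
  set p : Fin n × Fin n × Fin L → ℝ := fun q => ∫ ω, A q.1 q.2.1 q.2.2 ω with hpdef
  set x : Fin n × Fin n × Fin L → ℝ := fun q => u₁ q.1 * u₂ q.2.1 * u₃ q.2.2 with hxdef
  set c : Fin n × Fin n × Fin L → ℝ :=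
    fun q => if q.1 = q.2.1 then x q else x q + x (q.2.1, q.1, q.2.2) with hcdef
  -- basic facts about p
  have hp0 : ∀ q, 0 ≤ p q := fun q =>
    (aux_bern_mean_mem _ (hmeas _ _ _) (hval _ _ _)).1
  have hp1 : ∀ q, p q ≤ 1 := fun q =>
    (aux_bern_mean_mem _ (hmeas _ _ _) (hval _ _ _)).2
  have hple : ∀ q, p q ≤ pmax := fun q => hpmax.2 ⟨q.1, q.2.1, q.2.2, rfl⟩
  have hpsw : ∀ q : Fin n × Fin n × Fin L, p (q.2.1, q.1, q.2.2) = p q := by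
    intro q
    simp only [hpdef]
    rw [hsym]
  -- entry bounds
  have hu2e : ∀ j, |u₂ j| ≤ 1 := aux_entry_le u₂ hu₂
  have hu3e : ∀ l', |u₃ l'| ≤ 1 := aux_entry_le u₃ hu₃
  have hxabs : ∀ q, |x q| ≤ δ := by
    intro q
    simp only [hxdef]
    rw [abs_mul, abs_mul]
    have h1 := hinf q.1
    have h2 := hu2e q.2.1
    have h3 := hu3e q.2.2
    have n1 := abs_nonneg (u₁ q.1)
    have n2 := abs_nonneg (u₂ q.2.1)
    have n3 := abs_nonneg (u₃ q.2.2)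
    calc |u₁ q.1| * |u₂ q.2.1| * |u₃ q.2.2| ≤ δ * 1 * 1 := by
          apply mul_le_mul (mul_le_mul h1 h2 n2 hδ0.le) h3 n3
          nlinarith
      _ = δ := by ring
  have hcabs : ∀ q, |c q| ≤ 2 * δ := by
    intro q
    simp only [hcdef]
    split_ifs with h
    · linarith [hxabs q]
    · calc |x q + x (q.2.1, q.1, q.2.2)| ≤ |x q| + |x (q.2.1, q.1, q.2.2)| := abs_add_le _ _
        _ ≤ δ + δ := add_le_add (hxabs _) (hxabs _)
        _ = 2 * δ := by ring
  -- sum of x squared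
  have hx2sum : ∑ q : Fin n × Fin n × Fin L, x q ^ 2 ≤ 1 := by
    have inner3 : ∀ a : ℝ, ∑ i₃, (a * u₃ i₃) ^ 2 ≤ a ^ 2 := by
      intro a
      have e3 : ∑ i₃, (a * u₃ i₃) ^ 2 = a ^ 2 * ∑ i₃, u₃ i₃ ^ 2 := by
        rw [Finset.mul_sum]
        exact Finset.sum_congr rfl fun i _ => by ring
      rw [e3]
      nlinarith [sq_nonneg a, Finset.sum_nonneg (s := Finset.univ)
        (f := fun i : Fin L => u₃ i ^ 2) fun i _ => sq_nonneg _]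
    have inner2 : ∀ a : ℝ, ∑ i₂, (a * u₂ i₂) ^ 2 ≤ a ^ 2 := by
      intro a
      have e2 : ∑ i₂, (a * u₂ i₂) ^ 2 = a ^ 2 * ∑ i₂, u₂ i₂ ^ 2 := by
        rw [Finset.mul_sum]
        exact Finset.sum_congr rfl fun i _ => by ring
      rw [e2]
      nlinarith [sq_nonneg a, Finset.sum_nonneg (s := Finset.univ)
        (f := fun i : Fin n => u₂ i ^ 2) fun i _ => sq_nonneg _]
    have e0 : ∑ q : Fin n × Fin n × Fin L, x q ^ 2
        = ∑ i₁, ∑ i₂, ∑ i₃, (u₁ i₁ * u₂ i₂ * u₃ i₃) ^ 2 := by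
      simp only [hxdef, Fintype.sum_prod_type]
    rw [e0]
    calc ∑ i₁, ∑ i₂, ∑ i₃, (u₁ i₁ * u₂ i₂ * u₃ i₃) ^ 2
        ≤ ∑ i₁, ∑ i₂, (u₁ i₁ * u₂ i₂) ^ 2 :=
          Finset.sum_le_sum fun i₁ _ => Finset.sum_le_sum fun i₂ _ => inner3 _
      _ ≤ ∑ i₁, u₁ i₁ ^ 2 := Finset.sum_le_sum fun i₁ _ => inner2 _
      _ ≤ 1 := hu₁
  -- sum of c squared over the subdiagonal
  have hc2sum : ∑ q ∈ Finset.univ.filter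
      (fun q : Fin n × Fin n × Fin L => q.1 ≤ q.2.1), c q ^ 2 ≤ 2 := by
    have e := aux_sum_split (fun q => 2 * x q ^ 2)
      (fun q : Fin n × Fin n × Fin L => if q.1 = q.2.1 then 2 * x q ^ 2
        else 2 * x q ^ 2 + 2 * x (q.2.1, q.1, q.2.2) ^ 2)
      (fun q _ => rfl)
    have hle : ∑ q ∈ Finset.univ.filter
        (fun q : Fin n × Fin n × Fin L => q.1 ≤ q.2.1), c q ^ 2
        ≤ ∑ q ∈ Finset.univ.filter (fun q : Fin n × Fin n × Fin L => q.1 ≤ q.2.1),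
          (if q.1 = q.2.1 then 2 * x q ^ 2 else 2 * x q ^ 2 + 2 * x (q.2.1, q.1, q.2.2) ^ 2) := by
      apply Finset.sum_le_sum
      intro q _
      simp only [hcdef]
      split_ifs with h
      · nlinarith [sq_nonneg (x q)]
      · nlinarith [sq_nonneg (x q - x (q.2.1, q.1, q.2.2)), sq_nonneg (x q + x (q.2.1, q.1, q.2.2))]
    refine le_trans hle ?_
    rw [← e]
    have h2x : ∑ q : Fin n × Fin n × Fin L, 2 * x q ^ 2
        = 2 * ∑ q : Fin n × Fin n × Fin L, x q ^ 2 := by rw [Finset.mul_sum]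
    rw [h2x]
    linarith
  have hV : ∑ q ∈ Finset.univ.filter
      (fun q : Fin n × Fin n × Fin L => q.1 ≤ q.2.1), p q * c q ^ 2 ≤ 2 * pmax := by
    refine le_trans (Finset.sum_le_sum fun q _ =>
      mul_le_mul_of_nonneg_right (hple q) (sq_nonneg (c q))) ?_
    rw [← Finset.mul_sum]
    nlinarith [mul_le_mul_of_nonneg_left hc2sum hpmax_pos.le]
  -- the independent family
  set X : {q : Fin n × Fin n × Fin L // q.1 ≤ q.2.1} → Ω → ℝ :=
    fun q => fun ω => (A q.1.1 q.1.2.1 q.1.2.2 ω - p q.1) * c q.1 with hXdef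
  have hXmeas : ∀ q, Measurable (X q) := fun q => ((hmeas _ _ _).sub_const _).mul_const _
  have hXindep : iIndepFun X ℙ := by
    exact hindep.comp (fun q (v : ℝ) => (v - p q.1) * c q.1)
      (fun q => (measurable_id.sub_const _).mul_const _)
  -- parameters
  set D : ℝ := 2 * pmax + 2 * δ * t / 3 with hDdef
  have hD : 0 < D := by
    have := mul_pos hδ0 ht
    simp only [hDdef]
    linarith
  set l : ℝ := t / D with hldef
  have hl : 0 < l := div_pos ht hD
  set r : ℝ := 2 * δ * l / 3 with hrdef
  have hr0 : 0 ≤ r := by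
    simp only [hrdef]
    positivity
  have hr1 : r < 1 := by
    have he : r = (2 * δ * t / 3) / D := by
      simp only [hrdef, hldef]; ring
    rw [he, div_lt_one hD]
    simp only [hDdef]
    linarith
  -- per-variable mgf bound
  have hmgfq : ∀ q : {q : Fin n × Fin n × Fin L // q.1 ≤ q.2.1},
      mgf (X q) ℙ l ≤ Real.exp (l ^ 2 / (2 * (1 - r)) * (p q.1 * c q.1 ^ 2)) := by
    intro q
    have ha : l * c q.1 ≤ 3 * r := by
      have h3 : l * c q.1 ≤ l * (2 * δ) :=
        mul_le_mul_of_nonneg_left ((le_abs_self _).trans (hcabs q.1)) hl.le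
      simp only [hrdef]
      linarith
    have hmg : mgf (X q) ℙ l = ∫ ω, Real.exp ((l * c q.1) *
        (A q.1.1 q.1.2.1 q.1.2.2 ω - p q.1)) := by
      have : mgf (X q) ℙ l = ∫ ω, Real.exp (l * X q ω) := rfl
      rw [this]
      refine integral_congr_ae (ae_of_all _ fun ω => ?_)
      simp only [hXdef]
      ring_nf
    rw [hmg]
    have hb := aux_bern_mgf_le (A q.1.1 q.1.2.1 q.1.2.2) (hmeas _ _ _) (hval _ _ _)
      (l * c q.1) r hr1 hr0 ha
    have hpq : (∫ ω', A q.1.1 q.1.2.1 q.1.2.2 ω') = p q.1 := by simp only [hpdef]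
    rw [hpq] at hb
    refine le_trans hb (Real.exp_le_exp.2 (le_of_eq ?_))
    ring
  -- integrability
  have hXint : ∀ q : {q : Fin n × Fin n × Fin L // q.1 ≤ q.2.1},
      Integrable (fun ω => Real.exp (l * X q ω)) ℙ := by
    intro q
    have hbd : ∀ ω, ‖Real.exp (l * X q ω)‖ ≤ Real.exp |l * c q.1| := by
      intro ω
      rw [Real.norm_eq_abs, abs_of_pos (Real.exp_pos _)]
      apply Real.exp_le_exp.2
      refine (le_abs_self _).trans ?_
      have hAp : |A q.1.1 q.1.2.1 q.1.2.2 ω - p q.1| ≤ 1 := by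
        rcases hval q.1.1 q.1.2.1 q.1.2.2 ω with h | h <;> rw [h] <;>
          rw [abs_le] <;> constructor <;> linarith [hp0 q.1, hp1 q.1]
      calc |l * X q ω| = |l| * (|A q.1.1 q.1.2.1 q.1.2.2 ω - p q.1| * |c q.1|) := by
            simp only [hXdef]
            rw [abs_mul, abs_mul]
        _ ≤ |l| * (1 * |c q.1|) := by
            apply mul_le_mul_of_nonneg_left (mul_le_mul_of_nonneg_right hAp (abs_nonneg _))
              (abs_nonneg _)
        _ = |l * c q.1| := by rw [abs_mul]; ring
    exact (integrable_const _).mono' (((hXmeas q).const_mul l).exp).aestronglyMeasurable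
      (ae_of_all _ hbd)
  -- mgf of the sum
  have hmgfsum : mgf (∑ q, X q) ℙ l ≤ Real.exp (l ^ 2 / (2 * (1 - r)) * (2 * pmax)) := by
    rw [iIndepFun.mgf_sum hXindep hXmeas Finset.univ]
    have hfac : (0:ℝ) ≤ l ^ 2 / (2 * (1 - r)) :=
      div_nonneg (sq_nonneg l) (by linarith)
    calc ∏ q, mgf (X q) ℙ l
        ≤ ∏ q : {q : Fin n × Fin n × Fin L // q.1 ≤ q.2.1}, Real.exp (l ^ 2 / (2 * (1 - r)) * (p q.1 * c q.1 ^ 2)) :=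
          Finset.prod_le_prod (fun q _ => mgf_nonneg) (fun q _ => hmgfq q)
      _ = Real.exp (∑ q : {q : Fin n × Fin n × Fin L // q.1 ≤ q.2.1}, l ^ 2 / (2 * (1 - r)) * (p q.1 * c q.1 ^ 2)) :=
          (Real.exp_sum _ _).symm
      _ ≤ Real.exp (l ^ 2 / (2 * (1 - r)) * (2 * pmax)) := by
          apply Real.exp_le_exp.2
          rw [← Finset.mul_sum]
          apply mul_le_mul_of_nonneg_left ?_ hfac
          have hsub := Finset.sum_subtype
            (p := fun q : Fin n × Fin n × Fin L => q.1 ≤ q.2.1) (F := inferInstance)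
            (Finset.univ.filter (fun q : Fin n × Fin n × Fin L => q.1 ≤ q.2.1))
            (fun q => by simp) (fun q => p q * c q ^ 2)
          rw [← hsub]
          exact hV
  -- Chernoff
  have hint_sum : Integrable (fun ω => Real.exp (l * (∑ q, X q) ω)) ℙ :=
    hXindep.integrable_exp_mul_sum hXmeas (fun q _ => hXint q)
  have hcher := measure_ge_le_exp_mul_mgf (μ := ℙ) (X := ∑ q, X q) t hl.le hint_sum
  -- identify the event
  have hS : ∀ ω, (∑ i₁, ∑ i₂, ∑ i₃,
      (A i₁ i₂ i₃ ω - ∫ ω', A i₁ i₂ i₃ ω') * u₁ i₁ * u₂ i₂ * u₃ i₃) = (∑ q, X q) ω := by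
    intro ω
    rw [Finset.sum_apply]
    have hG : ∀ q : Fin n × Fin n × Fin L, q.1 ≤ q.2.1 →
        (A q.1 q.2.1 q.2.2 ω - p q) * c q
        = if q.1 = q.2.1 then (A q.1 q.2.1 q.2.2 ω - p q) * x q
          else (A q.1 q.2.1 q.2.2 ω - p q) * x q
            + (A (q.2.1, q.1, q.2.2).1 (q.2.1, q.1, q.2.2).2.1 (q.2.1, q.1, q.2.2).2.2 ω
                - p (q.2.1, q.1, q.2.2)) * x (q.2.1, q.1, q.2.2) := by
      intro q hq
      simp only [hcdef]
      split_ifs with h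
      · rfl
      · have hA : A q.2.1 q.1 q.2.2 = A q.1 q.2.1 q.2.2 := hsym _ _ _
        show (A q.1 q.2.1 q.2.2 ω - p q) * (x q + x (q.2.1, q.1, q.2.2)) = _
        rw [show ((q.2.1, q.1, q.2.2) : Fin n × Fin n × Fin L).1 = q.2.1 from rfl]
        rw [hA, hpsw]
        ring
    have hsplit := aux_sum_split
      (fun q : Fin n × Fin n × Fin L => (A q.1 q.2.1 q.2.2 ω - p q) * x q)
      (fun q : Fin n × Fin n × Fin L => (A q.1 q.2.1 q.2.2 ω - p q) * c q) hG
    have hsub := Finset.sum_subtype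
      (p := fun q : Fin n × Fin n × Fin L => q.1 ≤ q.2.1) (F := inferInstance)
      (Finset.univ.filter (fun q : Fin n × Fin n × Fin L => q.1 ≤ q.2.1))
      (fun q => by simp)
      (fun q : Fin n × Fin n × Fin L => (A q.1 q.2.1 q.2.2 ω - p q) * c q)
    have hLHS : (∑ i₁, ∑ i₂, ∑ i₃,
        (A i₁ i₂ i₃ ω - ∫ ω', A i₁ i₂ i₃ ω') * u₁ i₁ * u₂ i₂ * u₃ i₃)
        = ∑ q : Fin n × Fin n × Fin L, (A q.1 q.2.1 q.2.2 ω - p q) * x q := by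
      simp only [hxdef, hpdef, Fintype.sum_prod_type]
      apply Finset.sum_congr rfl
      intro i₁ _
      apply Finset.sum_congr rfl
      intro i₂ _
      apply Finset.sum_congr rfl
      intro i₃ _
      ring
    rw [hLHS, hsplit, hsub]
  have hsetq : {ω | t ≤ ∑ i₁, ∑ i₂, ∑ i₃,
      (A i₁ i₂ i₃ ω - ∫ ω', A i₁ i₂ i₃ ω') * u₁ i₁ * u₂ i₂ * u₃ i₃}
      = {ω | t ≤ (∑ q, X q) ω} := by
    ext ω
    simp only [Set.mem_setOf_eq, hS ω]
  rw [hsetq]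
  -- final numeric bound
  have h1r : 1 - r = 2 * pmax / D := by
    have he : r = (2 * δ * t / 3) / D := by simp only [hrdef, hldef]; ring
    rw [he]
    field_simp
    simp only [hDdef]
    ring
  have hexp_eq : Real.exp (-l * t) * Real.exp (l ^ 2 / (2 * (1 - r)) * (2 * pmax))
      = Real.exp (-t ^ 2 / (2 * D)) := by
    rw [← Real.exp_add]
    congr 1
    rw [h1r]
    simp only [hldef]
    field_simp
    ring
  have h2D : Real.exp (-l * t) * mgf (∑ q, X q) ℙ l ≤ Real.exp (-t ^ 2 / (2 * D)) := by
    calc Real.exp (-l * t) * mgf (∑ q, X q) ℙ l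
        ≤ Real.exp (-l * t) * Real.exp (l ^ 2 / (2 * (1 - r)) * (2 * pmax)) :=
          mul_le_mul_of_nonneg_left hmgfsum (Real.exp_nonneg _)
      _ = Real.exp (-t ^ 2 / (2 * D)) := hexp_eq
  have hfin : Real.exp (-t ^ 2 / (2 * D))
      ≤ Real.exp (-t ^ 2 / (8 * pmax)) + Real.exp (-(3 * t) / (8 * δ)) := by
    rcases le_or_gt (δ * t) (3 * pmax) with h | h
    · have hkey : -t ^ 2 / (2 * D) ≤ -t ^ 2 / (8 * pmax) := by
        rw [neg_div, neg_div]
        apply neg_le_neg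
        apply div_le_div_of_nonneg_left (sq_nonneg t) (by linarith)
        simp only [hDdef]
        linarith
      exact le_trans (Real.exp_le_exp.2 hkey) (le_add_of_nonneg_right (Real.exp_nonneg _))
    · have hkey : -t ^ 2 / (2 * D) ≤ -(3 * t) / (8 * δ) := by
        rw [neg_div, neg_div]
        apply neg_le_neg
        have hq : 3 * t / (8 * δ) = t ^ 2 / (8 * δ * t / 3) := by
          field_simp
        rw [hq]
        apply div_le_div_of_nonneg_left (sq_nonneg t) (by linarith)
        simp only [hDdef]
        linarith
      exact le_trans (Real.exp_le_exp.2 hkey) (le_add_of_nonneg_left (Real.exp_nonneg _))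
  have hP : ℙ {ω | t ≤ (∑ q, X q) ω}
      = ENNReal.ofReal ((ℙ {ω | t ≤ (∑ q, X q) ω}).toReal) :=
    (ENNReal.ofReal_toReal (measure_ne_top _ _)).symm
  rw [hP]
  exact ENNReal.ofReal_le_ofReal (le_trans hcher (le_trans h2D hfin))
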